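/- Let m ≥ 1 be a natural number and let G[X,Y] be a bipartite multigraph on finite disjoint vertex sets X and Y in which every edge has multiplicity at least m (i.e., for all x ∈ X, y ∈ Y, either e_G(x,y) = 0 or e_G(x,y) ≥ m). Let g assign natural numbers to vertices of X and f assign natural numbers to all vertices with f(y) ≤ m for all y ∈ Y. If ∑_{y∈N_G(S)} f(y) ≥ ∑_{x∈S} g(x) for every S ⊆ X, then for every A ⊆ X and every B ⊆ Y one has ∑_{y∈B} f(y) ≥ ∑_{x∈A} max{0, g(x) − e_G(x, Y∖B)}. -/
import Mathlib


/-- If the Hall-type condition `∑_{y∈N_G(S)} f(y) ≥ ∑_{x∈S} g(x)` holds for all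
`S ⊆ X` in a bipartite multigraph whose edge multiplicities are all `0` or `≥ m`,
and `f(y) ≤ m` on `Y`, then for all `A ⊆ X`, `B ⊆ Y` we have
`∑_{y∈B} f(y) ≥ ∑_{x∈A} max{0, g(x) − e_G(x, Y∖B)}`. -/
theorem hall_condition_implies_gf_condition
    {X Y : Type*} [Fintype X] [Fintype Y] [DecidableEq X] [DecidableEq Y]
    (m : ℕ) (hm : 1 ≤ m) (eG : X → Y → ℕ)
    (hmult : ∀ x y, eG x y = 0 ∨ m ≤ eG x y)
    (g : X → ℕ) (f : X ⊕ Y → ℕ)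
    (hfm : ∀ y : Y, f (Sum.inr y) ≤ m)
    (hhall : ∀ S : Finset X,
      ∑ x ∈ S, g x ≤
        ∑ y ∈ Finset.univ.filter (fun y : Y => ∃ x ∈ S, 0 < eG x y),
          f (Sum.inr y)) :
    ∀ (A : Finset X) (B : Finset Y),
      ∑ x ∈ A, (g x - ∑ y ∈ Bᶜ, eG x y) ≤ ∑ y ∈ B, f (Sum.inr y) := by
  classical
  intro A B
  set A' := A.filter (fun x => ∑ y ∈ Bᶜ, eG x y < g x) with hA'def
  have hAeq : ∑ x ∈ A, (g x - ∑ y ∈ Bᶜ, eG x y)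
      = ∑ x ∈ A', (g x - ∑ y ∈ Bᶜ, eG x y) := by
    rw [hA'def]
    refine (Finset.sum_filter_of_ne ?_).symm
    intro x _ hne
    omega
  have hle : ∀ x ∈ A', ∑ y ∈ Bᶜ, eG x y ≤ g x := by
    intro x hx
    have := (Finset.mem_filter.mp hx).2
    omega
  set N := Finset.univ.filter (fun y : Y => ∃ x ∈ A', 0 < eG x y) with hNdef
  have hsplit : ∑ y ∈ N, f (Sum.inr y)
      = ∑ y ∈ N.filter (· ∈ B), f (Sum.inr y)
      + ∑ y ∈ N.filter (· ∉ B), f (Sum.inr y) :=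
    (Finset.sum_filter_add_sum_filter_not N _ _).symm
  have h1 : ∑ y ∈ N.filter (· ∈ B), f (Sum.inr y) ≤ ∑ y ∈ B, f (Sum.inr y) := by
    refine Finset.sum_le_sum_of_subset ?_
    intro y hy
    exact (Finset.mem_filter.mp hy).2
  have h2 : ∑ y ∈ N.filter (· ∉ B), f (Sum.inr y)
      ≤ ∑ x ∈ A', ∑ y ∈ Bᶜ, eG x y := by
    calc ∑ y ∈ N.filter (· ∉ B), f (Sum.inr y)
        ≤ ∑ y ∈ N.filter (· ∉ B), ∑ x ∈ A', eG x y := by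
          refine Finset.sum_le_sum ?_
          intro y hy
          have hyN := (Finset.mem_filter.mp hy).1
          obtain ⟨x, hxA', hxe⟩ := (Finset.mem_filter.mp hyN).2
          have hmle : m ≤ eG x y := by
            rcases hmult x y with h | h
            · omega
            · exact h
          calc f (Sum.inr y) ≤ m := hfm y
            _ ≤ eG x y := hmle
            _ ≤ ∑ x ∈ A', eG x y :=
                Finset.single_le_sum (f := fun x' => eG x' y)
                  (fun i _ => Nat.zero_le _) hxA'
      _ ≤ ∑ y ∈ Bᶜ, ∑ x ∈ A', eG x y := by
          refine Finset.sum_le_sum_of_subset ?_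
          intro y hy
          simp only [Finset.mem_compl]
          exact (Finset.mem_filter.mp hy).2
      _ = ∑ x ∈ A', ∑ y ∈ Bᶜ, eG x y := Finset.sum_comm
  have hH := hhall A'
  have hkey : ∑ x ∈ A', (g x - ∑ y ∈ Bᶜ, eG x y) + ∑ x ∈ A', ∑ y ∈ Bᶜ, eG x y
      = ∑ x ∈ A', g x := by
    rw [← Finset.sum_add_distrib]
    refine Finset.sum_congr rfl fun x hx => ?_
    have := hle x hx
    omega
  have hmain : ∑ x ∈ A', g x ≤ ∑ y ∈ B, f (Sum.inr y) + ∑ x ∈ A', ∑ y ∈ Bᶜ, eG x y := by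
    calc ∑ x ∈ A', g x ≤ ∑ y ∈ N, f (Sum.inr y) := hH
      _ = _ := hsplit
      _ ≤ _ := Nat.add_le_add h1 h2
  omega
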